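/- Let 𝔤 be a finite-dimensional real Lie algebra with n := dim 𝔤, let 𝔥 ⊆ 𝔤 be a Cartan subalgebra, and define the linear subspace 𝔤_𝔥 := Σ_{h ∈ 𝔥} (ad h)^n(𝔤) ⊆ 𝔤 (the span of the ranges of the operators (ad h)^n for h ∈ 𝔥). If the ideal 𝔤^∞ := ⋂_{j≥1} 𝔤^j is abelian, then 𝔤^∞ = 𝔤_𝔥. -/

import Mathlib

open LieModule LieAlgebra Module

private lemma aux_range_pow_le {K V : Type*} [Field K] [AddCommGroup V] [Module K V]
    (f : Module.End K V) {a b : ℕ} (h : a ≤ b) :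
    LinearMap.range (f ^ b) ≤ LinearMap.range (f ^ a) := by
  obtain ⟨c, rfl⟩ := Nat.exists_eq_add_of_le h
  rw [pow_add, Module.End.mul_eq_comp]
  exact LinearMap.range_comp_le_range _ _

private lemma aux_iInf_range_pow {K V : Type*} [Field K] [AddCommGroup V] [Module K V]
    [Module.Finite K V] (f : Module.End K V) :
    (⨅ k, LinearMap.range (f ^ k)) = LinearMap.range (f ^ (finrank K V)) := by
  refine le_antisymm (iInf_le _ _) (le_iInf fun k => ?_)
  rcases le_total k (finrank K V) with h | h
  · exact aux_range_pow_le f h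
  · have hker : LinearMap.ker (f ^ k) = LinearMap.ker (f ^ finrank K V) :=
      Module.End.ker_pow_eq_ker_pow_finrank_of_le h
    have hle : LinearMap.range (f ^ k) ≤ LinearMap.range (f ^ finrank K V) :=
      aux_range_pow_le f h
    have h1 := LinearMap.finrank_range_add_finrank_ker (f ^ k)
    have h2 := LinearMap.finrank_range_add_finrank_ker (f ^ finrank K V)
    rw [hker] at h1
    have hfr : finrank K (LinearMap.range (f ^ finrank K V))
        ≤ finrank K (LinearMap.range (f ^ k)) := by omega
    exact (Submodule.eq_of_le_of_finrank_le hle hfr).symm.le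

/-- If `𝔤^∞ := ⋂_{j≥1} 𝔤^j` is abelian, then for every Cartan subalgebra `𝔥` of the
`n`-dimensional real Lie algebra `𝔤` one has `𝔤^∞ = 𝔤_𝔥 := Σ_{h ∈ 𝔥} (ad h)^n(𝔤)`. -/
theorem stmt2 (L : Type*) [LieRing L] [LieAlgebra ℝ L] [Module.Finite ℝ L]
    (H : LieSubalgebra ℝ L) (hH : H.IsCartanSubalgebra)
    (habelian : ∀ x ∈ (⨅ k, LieModule.lowerCentralSeries ℝ L L k),
      ∀ y ∈ (⨅ k, LieModule.lowerCentralSeries ℝ L L k), ⁅x, y⁆ = 0) :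
    (⨅ k, LieModule.lowerCentralSeries ℝ L L k).toSubmodule
      = ⨆ h ∈ H, LinearMap.range ((LieAlgebra.ad ℝ L h) ^ (Module.finrank ℝ L)) := by
  haveI : LieRing.IsNilpotent H := hH.nilpotent
  -- each `(ad h)^n`-range is the positive Fitting component of `h`
  have key : ∀ (h : L) (hh : h ∈ H),
      ((posFittingCompOf ℝ L (⟨h, hh⟩ : H)).toSubmodule)
        = LinearMap.range ((ad ℝ L h) ^ (finrank ℝ L)) := by
    intro h hh
    have e : (posFittingCompOf ℝ L (⟨h, hh⟩ : H)).toSubmodule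
        = ⨅ k, LinearMap.range (toEnd ℝ H L (⟨h, hh⟩ : H) ^ k) := rfl
    rw [e, aux_iInf_range_pow]
    rfl
  -- RHS equals the positive Fitting component of the `H`-action
  have hRHS : (⨆ h ∈ H, LinearMap.range ((ad ℝ L h) ^ (finrank ℝ L)))
      = (posFittingComp ℝ H L).toSubmodule := by
    rw [posFittingComp, LieSubmodule.iSup_toSubmodule]
    refine le_antisymm (iSup₂_le fun h hh => ?_) (iSup_le fun x => ?_)
    · exact (key h hh) ▸ le_iSup (fun x : H => (posFittingCompOf ℝ L x).toSubmodule) ⟨h, hh⟩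
    · exact le_iSup₂_of_le (x : L) x.2 (key (x : L) x.2).le
  have hJF : (⨅ k, lowerCentralSeries ℝ H L k) = posFittingComp ℝ H L :=
    iInf_lowerCentralSeries_eq_posFittingComp ℝ H L
  -- lcs of `H`-action is contained in lcs of `L`-action
  have hJI : ∀ k, ∀ x ∈ lowerCentralSeries ℝ H L k, x ∈ lowerCentralSeries ℝ L L k := by
    intro k
    induction k with
    | zero => intro x _; exact LieSubmodule.mem_top x
    | succ k ih =>
      intro x hx
      rw [LieModule.lowerCentralSeries_succ] at hx
      rw [← LieSubmodule.mem_toSubmodule, LieSubmodule.lieIdeal_oper_eq_linear_span'] at hx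
      rw [LieModule.lowerCentralSeries_succ]
      induction hx using Submodule.span_induction with
      | mem y hy =>
        obtain ⟨a, -, z, hz, rfl⟩ := hy
        exact LieSubmodule.lie_mem_lie (LieSubmodule.mem_top (a : L)) (ih z hz)
      | zero => exact LieSubmodule.zero_mem _
      | add y z _ _ hy hz => exact add_mem hy hz
      | smul c y _ hy => exact Submodule.smul_mem _ c hy
  -- hence posFittingComp ⊆ 𝔤^∞
  have hFI : ∀ x ∈ posFittingComp ℝ H L, x ∈ (⨅ k, lowerCentralSeries ℝ L L k) := by
    intro x hx
    rw [← hJF, LieSubmodule.mem_iInf] at hx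
    rw [LieSubmodule.mem_iInf]
    exact fun k => hJI k x (hx k)
  -- stabilization: ⁅⊤, 𝔤^∞⁆ = 𝔤^∞
  obtain ⟨m, hm⟩ := Filter.eventually_atTop.mp (eventually_iInf_lowerCentralSeries_eq ℝ L L)
  have hstab : ⁅(⊤ : LieIdeal ℝ L), (⨅ k, lowerCentralSeries ℝ L L k)⁆
      = ⨅ k, lowerCentralSeries ℝ L L k := by
    have h1 := hm m le_rfl
    have h2 := hm (m + 1) (Nat.le_succ m)
    calc ⁅(⊤ : LieIdeal ℝ L), (⨅ k, lowerCentralSeries ℝ L L k)⁆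
        = ⁅(⊤ : LieIdeal ℝ L), lowerCentralSeries ℝ L L m⁆ := by rw [h1]
      _ = lowerCentralSeries ℝ L L (m + 1) := (LieModule.lowerCentralSeries_succ ℝ L L m).symm
      _ = ⨅ k, lowerCentralSeries ℝ L L k := h2.symm
  -- codisjointness: H ⊔ posFittingComp = ⊤
  have hcod : (H.toSubmodule : Submodule ℝ L) ⊔ (posFittingComp ℝ H L).toSubmodule = ⊤ := by
    have hcompl := (isCompl_genWeightSpace_zero_posFittingComp ℝ H L).codisjoint
    rw [codisjoint_iff] at hcompl
    have h0 : (genWeightSpace L (0 : H → ℝ)) = H.toLieSubmodule := rootSpace_zero_eq ℝ L H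
    rw [h0] at hcompl
    have := congrArg (fun N : LieSubmodule ℝ H L => N.toSubmodule) hcompl
    simpa [LieSubmodule.sup_toSubmodule] using this
  -- 𝔤^∞ is contained in every lcs of the `H`-action
  have hIJ : ∀ k, ∀ x ∈ (⨅ j, lowerCentralSeries ℝ L L j), x ∈ lowerCentralSeries ℝ H L k := by
    intro k
    induction k with
    | zero => intro x _; exact LieSubmodule.mem_top x
    | succ k ih =>
      intro x hx
      rw [← hstab, ← LieSubmodule.mem_toSubmodule,
        LieSubmodule.lieIdeal_oper_eq_linear_span'] at hx
      rw [LieModule.lowerCentralSeries_succ]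
      induction hx using Submodule.span_induction with
      | mem y hy =>
        obtain ⟨a, -, z, hz, rfl⟩ := hy
        have ha : a ∈ (H.toSubmodule : Submodule ℝ L) ⊔ (posFittingComp ℝ H L).toSubmodule := by
          rw [hcod]; trivial
        obtain ⟨h, hh, f, hf, rfl⟩ := Submodule.mem_sup.mp ha
        have hfI : f ∈ (⨅ j, lowerCentralSeries ℝ L L j) := hFI f hf
        have hzero : ⁅f, z⁆ = 0 := habelian f hfI z hz
        have hbr : ⁅h + f, z⁆ = ⁅h, z⁆ := by rw [add_lie, hzero, add_zero]
        rw [hbr]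
        exact LieSubmodule.lie_mem_lie (LieSubmodule.mem_top (⟨h, hh⟩ : H)) (ih z hz)
      | zero => exact LieSubmodule.zero_mem _
      | add y z _ _ hy hz => exact add_mem hy hz
      | smul c y _ hy => exact Submodule.smul_mem _ c hy
  -- conclude
  rw [hRHS]
  ext x
  rw [LieSubmodule.mem_toSubmodule, LieSubmodule.mem_toSubmodule]
  constructor
  · intro hx
    rw [← hJF, LieSubmodule.mem_iInf]
    exact fun k => hIJ k x hx
  · exact hFI x
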